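/- Let F : R^d → R have L-Lipschitz gradient, H = B B^T with minimum eigenvalue at least R > 0, b = B^T g, and suppose g satisfies ∇F(ψ_t)^T g + (F(ψ_t) - d + ζ) ≤ 0. Assume ψ_t is in the in-boundary set, i.e., F(ψ_t) - d + ζ ≤ √(2ε)‖B^{-1}∇F(ψ_t)‖ ≤ √(2ε) M with √(2ε) M ≤ ζ. If the step size β_t satisfies 0 < β_t ≤ 1 and β_t = (2√(2ε) m R)/(L‖b‖²) β'_t with β'_t < 1 and m ≤ M, then F(ψ_t + β_t g) ≤ d. -/

import Mathlib

open RealInnerProductSpace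

/-- Descent lemma: if `∇F` is `L`-Lipschitz, then
`F (x + v) ≤ F x + ⟪∇F x, v⟫ + L/2 ‖v‖²`. -/
lemma descent_lemma {n : ℕ} (F : EuclideanSpace ℝ (Fin n) → ℝ)
    (hdiff : Differentiable ℝ F) (L : ℝ) (hL : 0 < L)
    (hLip : LipschitzWith (Real.toNNReal L) (gradient F))
    (x v : EuclideanSpace ℝ (Fin n)) :
    F (x + v) ≤ F x + ⟪gradient F x, v⟫ + L / 2 * ‖v‖ ^ 2 := by
  have key : ∀ p : EuclideanSpace ℝ (Fin n),
      HasFDerivAt F ((InnerProductSpace.toDualMap ℝ _) (gradient F p) :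
        EuclideanSpace ℝ (Fin n) →L[ℝ] ℝ) p := fun p =>
    (hasGradientAt_iff_hasFDerivAt.mp (hdiff p).hasGradientAt)
  set φ : ℝ → ℝ := fun t => F (x + t • v) - (⟪gradient F x, v⟫ * t + L / 2 * ‖v‖ ^ 2 * t ^ 2)
    with hφ
  have hc : ∀ t : ℝ, HasDerivAt (fun t : ℝ => x + t • v) v t := fun t => by
    simpa using ((hasDerivAt_id t).smul_const v).const_add x
  have hFc : ∀ t : ℝ, HasDerivAt (fun t : ℝ => F (x + t • v))
      ⟪gradient F (x + t • v), v⟫ t := fun t => by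
    have h := (key (x + t • v)).comp_hasDerivAt t (hc t)
    simp at h ⊢
    exact h
  have hφ' : ∀ t : ℝ, HasDerivAt φ
      (⟪gradient F (x + t • v), v⟫ - (⟪gradient F x, v⟫ + L / 2 * ‖v‖ ^ 2 * (2 * t))) t := by
    intro t
    have h2 : HasDerivAt (fun t : ℝ => ⟪gradient F x, v⟫ * t + L / 2 * ‖v‖ ^ 2 * t ^ 2)
        (⟪gradient F x, v⟫ + L / 2 * ‖v‖ ^ 2 * (2 * t)) t := by
      have := ((hasDerivAt_id t).const_mul (⟪gradient F x, v⟫)).add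
        ((hasDerivAt_pow 2 t).const_mul (L / 2 * ‖v‖ ^ 2))
      simp [mul_comm, mul_assoc] at this ⊢
      exact this
    exact (hFc t).sub h2
  have hdφ : ∀ t ∈ Set.Icc (0:ℝ) 1, deriv φ t ≤ 0 := by
    intro t ht
    rw [(hφ' t).deriv]
    have hbound : ⟪gradient F (x + t • v) - gradient F x, v⟫ ≤ L * t * ‖v‖ ^ 2 := by
      calc ⟪gradient F (x + t • v) - gradient F x, v⟫
          ≤ ‖gradient F (x + t • v) - gradient F x‖ * ‖v‖ := real_inner_le_norm _ _
        _ ≤ (L * (t * ‖v‖)) * ‖v‖ := by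
            apply mul_le_mul_of_nonneg_right _ (norm_nonneg v)
            have := hLip.dist_le_mul (x + t • v) x
            simp only [dist_eq_norm] at this
            have h1 : (x + t • v) - x = t • v := by abel
            rw [h1] at this
            calc ‖gradient F (x + t • v) - gradient F x‖
                = dist (gradient F (x + t • v)) (gradient F x) := (dist_eq_norm _ _).symm
              _ ≤ (Real.toNNReal L : ℝ) * ‖t • v‖ := this
              _ = L * (t * ‖v‖) := by
                  rw [Real.coe_toNNReal _ hL.le, norm_smul, Real.norm_eq_abs,
                    abs_of_nonneg ht.1]
        _ = L * t * ‖v‖ ^ 2 := by ring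
    have := hbound
    rw [inner_sub_left] at this
    nlinarith [this]
  have hanti : AntitoneOn φ (Set.Icc (0:ℝ) 1) := by
    apply antitoneOn_of_deriv_nonpos (convex_Icc 0 1)
    · exact (Differentiable.continuous fun t => (hφ' t).differentiableAt).continuousOn
    · intro t _
      exact (hφ' t).differentiableAt.differentiableWithinAt
    · intro t ht
      exact hdφ t (interior_subset ht)
  have h01 : φ 1 ≤ φ 0 := hanti (by norm_num) (by norm_num) (by norm_num)
  simp only [hφ, one_smul, zero_smul, add_zero, one_pow, mul_one, zero_pow, mul_zero,
    sub_zero] at h01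
  linarith

set_option maxHeartbeats 1000000 in
/-- Constraint satisfaction in the in-boundary case: if
`∇F(ψₜ)ᵀ g + (F(ψₜ) - d + ζ) ≤ 0`, the iterate is in-boundary
(`F(ψₜ) - d + ζ ≤ √(2ε)‖B⁻¹∇F(ψₜ)‖ ≤ √(2ε)M`) with `√(2ε)M ≤ ζ`, and the step size
satisfies `0 < βₜ ≤ 1`, `βₜ = (2√(2ε)mR)/(L‖b‖²)·β'ₜ` with `β'ₜ < 1` and `m ≤ M`,
then `F(ψₜ + βₜ g) ≤ d`. -/
theorem stmt_4 {n : ℕ} (F : EuclideanSpace ℝ (Fin n) → ℝ)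
    (hdiff : Differentiable ℝ F) (L : ℝ) (hL : 0 < L)
    (hLip : LipschitzWith (Real.toNNReal L) (gradient F))
    (B H : Matrix (Fin n) (Fin n) ℝ) (hHB : H = B * B.transpose) (hH : H.PosDef)
    (R : ℝ) (hR : 0 < R)
    (heig : ∀ x : EuclideanSpace ℝ (Fin n), R * ‖x‖ ^ 2 ≤ ⟪x, Matrix.toEuclideanLin H x⟫)
    (ε ζ dth M m : ℝ) (hε : 0 < ε) (hζ : 0 < ζ) (hm : 0 < m) (hmM : m ≤ M)
    (ψt g b : EuclideanSpace ℝ (Fin n))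
    (hb : b = Matrix.toEuclideanLin B.transpose g)
    (hconstr : ⟪gradient F ψt, g⟫ + (F ψt - dth + ζ) ≤ 0)
    (hin : F ψt - dth + ζ ≤
      Real.sqrt (2 * ε) * ‖Matrix.toEuclideanLin B⁻¹ (gradient F ψt)‖)
    (hgradM : Real.sqrt (2 * ε) * ‖Matrix.toEuclideanLin B⁻¹ (gradient F ψt)‖ ≤
      Real.sqrt (2 * ε) * M)
    (hMζ : Real.sqrt (2 * ε) * M ≤ ζ)
    (βt β't : ℝ) (hβpos : 0 < βt) (hβle : βt ≤ 1)
    (hβ't : β't < 1)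
    (hβ : βt = (2 * Real.sqrt (2 * ε) * m * R) / (L * ‖b‖ ^ 2) * β't) :
    F (ψt + βt • g) ≤ dth := by
  set s := Real.sqrt (2 * ε) with hs
  have hspos : 0 < s := Real.sqrt_pos.mpr (by linarith)
  -- ‖b‖ ≠ 0
  have hbne : ‖b‖ ≠ 0 := by
    intro h
    rw [h] at hβ
    norm_num at hβ
    rw [hβ] at hβpos
    exact lt_irrefl _ hβpos
  have hbpos : 0 < ‖b‖ := (norm_nonneg b).lt_of_ne' hbne
  -- ‖g‖² ≤ ‖b‖² / R
  have hHg : ⟪g, Matrix.toEuclideanLin H g⟫ = ‖b‖ ^ 2 := by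
    have hBT : (B.transpose).conjTranspose = B := by
      ext i j; simp [Matrix.conjTranspose_apply]
    have hmul : Matrix.toEuclideanLin H g =
        Matrix.toEuclideanLin B (Matrix.toEuclideanLin B.transpose g) := by
      rw [hHB]
      simp [Matrix.toEuclideanLin_apply, Matrix.mulVec_mulVec]
    have hadj : (Matrix.toEuclideanLin B : EuclideanSpace ℝ (Fin n) →ₗ[ℝ] _) =
        LinearMap.adjoint (Matrix.toEuclideanLin B.transpose) := by
      rw [← Matrix.toEuclideanLin_conjTranspose_eq_adjoint, hBT]
    rw [hmul, ← hb, hadj, LinearMap.adjoint_inner_right, ← hb, real_inner_self_eq_norm_sq]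
  have hgsq : ‖g‖ ^ 2 ≤ ‖b‖ ^ 2 / R := by
    have := heig g
    rw [hHg] at this
    rw [le_div_iff₀ hR]
    linarith [this]
  -- step size positivity of β't
  have hc : 0 < (2 * s * m * R) / (L * ‖b‖ ^ 2) := by
    apply div_pos (by positivity) (by positivity)
  have hβ'pos : 0 < β't := by
    by_contra h
    push_neg at h
    have : βt ≤ 0 := by
      rw [hβ]
      exact mul_nonpos_of_nonneg_of_nonpos hc.le h
    linarith
  -- descent lemma
  have hdesc := descent_lemma F hdiff L hL hLip ψt (βt • g)
  rw [real_inner_smul_right, norm_smul, Real.norm_eq_abs, abs_of_pos hβpos] at hdesc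
  -- quadratic term bound
  have hquad : L / 2 * (βt * ‖g‖) ^ 2 ≤ βt * (s * m * β't) := by
    have h1 : L / 2 * (βt * ‖g‖) ^ 2 ≤ L / 2 * βt ^ 2 * (‖b‖ ^ 2 / R) := by
      have : βt ^ 2 * ‖g‖ ^ 2 ≤ βt ^ 2 * (‖b‖ ^ 2 / R) :=
        mul_le_mul_of_nonneg_left hgsq (by positivity)
      nlinarith
    have h2 : L / 2 * βt ^ 2 * (‖b‖ ^ 2 / R) = βt * (s * m * β't) := by
      rw [hβ]
      field_simp
    linarith
  -- combine
  have hA : F ψt - dth + ζ ≤ ζ := le_trans (hin.trans hgradM) hMζ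
  have hsm : s * m * β't ≤ ζ := by
    have h1 : s * m * β't ≤ s * m := by
      nlinarith [mul_nonneg (mul_pos hspos hm).le (sub_nonneg.mpr hβ't.le)]
    have h2 : s * m ≤ s * M := mul_le_mul_of_nonneg_left hmM hspos.le
    linarith
  have hinner : ⟪gradient F ψt, g⟫ ≤ -(F ψt - dth + ζ) := by linarith
  have hstep : F (ψt + βt • g) ≤ F ψt - βt * (F ψt - dth + ζ) + βt * (s * m * β't) := by
    have h3 := mul_le_mul_of_nonneg_left hinner hβpos.le
    linarith [hdesc, hquad]
  have fact1 : (1 - βt) * (F ψt - dth + ζ) ≤ (1 - βt) * ζ :=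
    mul_le_mul_of_nonneg_left hA (by linarith)
  have fact2 : βt * (s * m * β't) ≤ βt * ζ :=
    mul_le_mul_of_nonneg_left hsm hβpos.le
  nlinarith [hstep, fact1, fact2]
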